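/- arXiv:1803.08556 — 3 statements merged into one kernel-verified Lean document; each statement's English description precedes it below -/
import Mathlib

section
/- If {X_λ} is a family of compact topological spaces such that each path-component space π₀(X_λ) is Hausdorff, then the natural continuous bijection φ : π₀(∏_λ X_λ) → ∏_λ π₀(X_λ) is a homeomorphism. -/
/-- The path-component space `π₀(X)`: the quotient of `X` by the relation of being
joined by a path, equipped with the quotient topology. -/
instance pi0TopologicalSpace (X : Type*) [TopologicalSpace X] :
    TopologicalSpace (ZerothHomotopy X) :=
  instTopologicalSpaceQuotient

/-- The natural quotient map `q_X : X → π₀(X)`. -/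
def pi0Mk {X : Type*} [TopologicalSpace X] (x : X) : ZerothHomotopy X :=
  Quotient.mk (pathSetoid X) x

/-- If each `X_λ` is compact and each `π₀(X_λ)` is Hausdorff, then the canonical
bijection `φ : π₀(∏ X_λ) → ∏ π₀(X_λ)` is a homeomorphism. -/
theorem pi0_prod_homeomorph_of_compact {Λ : Type*} {X : Λ → Type*}
    [∀ l, TopologicalSpace (X l)] [∀ l, CompactSpace (X l)]
    [∀ l, T2Space (ZerothHomotopy (X l))]
    (φ : ZerothHomotopy (∀ l, X l) → ∀ l, ZerothHomotopy (X l))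
    (hφ : ∀ x : ∀ l, X l, φ (pi0Mk x) = fun l => pi0Mk (x l)) :
    IsHomeomorph φ := by
  -- π₀ of the product is compact, target is Hausdorff
  have hqm : Topology.IsQuotientMap (pi0Mk : (∀ l, X l) → ZerothHomotopy (∀ l, X l)) :=
    isQuotientMap_quotient_mk'
  have hcont : Continuous φ := by
    rw [hqm.continuous_iff]
    have : (φ ∘ pi0Mk : (∀ l, X l) → ∀ l, ZerothHomotopy (X l))
        = fun x l => pi0Mk (x l) := funext hφ
    rw [this]
    exact continuous_pi fun l => (continuous_quotient_mk').comp (continuous_apply l)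
  have hinj : Function.Injective φ := by
    intro a b hab
    obtain ⟨x, rfl⟩ := Quotient.exists_rep a
    obtain ⟨y, rfl⟩ := Quotient.exists_rep b
    have h : ∀ l, Joined (x l) (y l) := by
      intro l
      have h2 := congrFun (((hφ x).symm.trans hab).trans (hφ y)) l
      exact Quotient.exact h2
    have hxy : Joined x y := ⟨Path.pi fun l => (h l).somePath⟩
    exact Quotient.sound hxy
  have hsurj : Function.Surjective φ := by
    intro c
    choose x hx using fun l => Quotient.exists_rep (c l)
    refine ⟨pi0Mk x, ?_⟩
    rw [hφ]
    exact funext hx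
  haveI : CompactSpace (ZerothHomotopy (∀ l, X l)) :=
    Quotient.compactSpace
  have hclosed : IsClosedMap φ := hcont.isClosedMap
  refine isHomeomorph_iff_continuous_isClosedMap_bijective.mpr ⟨hcont, hclosed, hinj, hsurj⟩
end

section
/- Suppose A is a compact Hausdorff space such that π₀(A) is Hausdorff, and let X ⊆ π₀(A) be a subspace. If B = q_A⁻¹(X) ⊆ A, then the restriction q_A|_B : B → X is a perfect quotient map identifying exactly the path components of B; hence there is a canonical homeomorphism π₀(B) ≅ X. -/
theorem pi0Mk_continuous {X : Type*} [TopologicalSpace X] :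
    Continuous (pi0Mk : X → ZerothHomotopy X) :=
  continuous_quotient_mk'

theorem joined_of_pi0Mk_eq {X : Type*} [TopologicalSpace X] {a b : X}
    (h : pi0Mk a = pi0Mk b) : Joined a b :=
  Quotient.exact h

theorem pi0Mk_eq_of_joined {X : Type*} [TopologicalSpace X] {a b : X}
    (h : Joined a b) : pi0Mk a = pi0Mk b :=
  Quotient.sound h

/-- A point on a path is joined to the source. -/
theorem joined_source_of_path {X : Type*} [TopologicalSpace X] {a b : X}
    (γ : Path a b) (t : unitInterval) : Joined a (γ t) :=
  ⟨(γ.truncateOfLE t.2.1).cast (γ.extend_zero.symm) (γ.extend_extends' t).symm⟩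

/-- If `A` is compact Hausdorff with `π₀(A)` Hausdorff and `X ⊆ π₀(A)`, then for
`B = q_A⁻¹(X)` the restriction `q_A|_B : B → X` is a perfect quotient map identifying
exactly the path components of `B`; hence `π₀(B) ≅ X` canonically. -/
theorem pi0_restrict_perfect {A : Type*} [TopologicalSpace A] [CompactSpace A] [T2Space A]
    [T2Space (ZerothHomotopy A)] (X : Set (ZerothHomotopy A)) :
    ∃ r : ((pi0Mk : A → ZerothHomotopy A) ⁻¹' X) → X,
      (∀ b, (r b : ZerothHomotopy A) = pi0Mk (b : A)) ∧
      Continuous r ∧ IsClosedMap r ∧ (∀ x : X, IsCompact (r ⁻¹' {x})) ∧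
      Topology.IsQuotientMap r ∧
      (∀ a b, r a = r b ↔ Joined a b) ∧
      ∃ h : ZerothHomotopy ((pi0Mk : A → ZerothHomotopy A) ⁻¹' X) ≃ₜ X,
        ∀ b, h (pi0Mk b) = r b := by
  classical
  set q : A → ZerothHomotopy A := pi0Mk with hq
  set B : Set A := q ⁻¹' X with hB
  refine ⟨X.restrictPreimage q, fun b => rfl, ?_⟩
  have hqc : Continuous q := pi0Mk_continuous
  -- q is a closed map
  have hqclosed : IsClosedMap q := fun s hs => (hs.isCompact.image hqc).isClosed
  have hrc : Continuous (X.restrictPreimage q) :=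
    Continuous.restrictPreimage hqc
  have hrclosed : IsClosedMap (X.restrictPreimage q) := hqclosed.restrictPreimage X
  have hrsurj : Function.Surjective (X.restrictPreimage q) := by
    rintro ⟨x, hx⟩
    obtain ⟨a, rfl⟩ := Quotient.exists_rep x
    exact ⟨⟨a, hx⟩, rfl⟩
  -- the key equivalence: r a = r b ↔ Joined a b in B
  have hjoined : ∀ a b : B, X.restrictPreimage q a = X.restrictPreimage q b ↔ Joined a b := by
    intro a b
    constructor
    · intro h
      have hAB : q a.1 = q b.1 := congrArg Subtype.val h
      have hJ : Joined a.1 b.1 := joined_of_pi0Mk_eq hAB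
      obtain ⟨γ⟩ := hJ
      have hmem : ∀ t, γ t ∈ B := by
        intro t
        have : Joined a.1 (γ t) := joined_source_of_path γ t
        have : q (γ t) = q a.1 := (pi0Mk_eq_of_joined this).symm
        show q (γ t) ∈ X
        rw [this]
        exact a.2
      have : JoinedIn B a.1 b.1 := ⟨γ, hmem⟩
      exact this.joined_subtype
    · intro h
      obtain ⟨γ⟩ := h
      have : Joined a.1 b.1 := ⟨γ.map continuous_subtype_val⟩
      exact Subtype.ext (pi0Mk_eq_of_joined this)
  have hquot : Topology.IsQuotientMap (X.restrictPreimage q) :=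
    hrclosed.isQuotientMap hrc hrsurj
  refine ⟨hrc, hrclosed, ?_, hquot, hjoined, ?_⟩
  · -- compact fibers
    intro x
    have hkey : Subtype.val '' ((X.restrictPreimage q) ⁻¹' {x}) = q ⁻¹' {(x : ZerothHomotopy A)} := by
      ext a
      constructor
      · rintro ⟨⟨a', ha'⟩, hmem, rfl⟩
        simpa [Set.restrictPreimage, Subtype.ext_iff] using hmem
      · intro ha
        have haB : a ∈ B := by
          show q a ∈ X
          rw [Set.mem_preimage, Set.mem_singleton_iff] at ha
          rw [ha]; exact x.2
        exact ⟨⟨a, haB⟩, by simpa [Set.restrictPreimage, Subtype.ext_iff] using ha, rfl⟩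
    have hclosed : IsClosed (q ⁻¹' {(x : ZerothHomotopy A)}) :=
      (isClosed_singleton).preimage hqc
    have hcomp : IsCompact (q ⁻¹' {(x : ZerothHomotopy A)}) := hclosed.isCompact
    rw [Topology.IsEmbedding.subtypeVal.isCompact_iff, hkey]
    exact hcomp
  · -- the homeomorphism
    let h : ZerothHomotopy B → X := Quotient.lift (X.restrictPreimage q)
      (fun a b hab => (hjoined a b).mpr hab)
    have hhc : Continuous h := continuous_quot_lift _ hrc
    have hcomp : X.restrictPreimage q = h ∘ (pi0Mk : B → ZerothHomotopy B) := rfl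
    have hhquot : Topology.IsQuotientMap h :=
      Topology.IsQuotientMap.of_comp pi0Mk_continuous hhc (hcomp ▸ hquot)
    have hbij : Function.Bijective h := by
      constructor
      · rintro ⟨a⟩ ⟨b⟩ hab
        exact Quotient.sound ((hjoined a b).mp hab)
      · intro x
        obtain ⟨b, hb⟩ := hrsurj x
        exact ⟨pi0Mk b, hb⟩
    let e := Equiv.ofBijective h hbij
    have hesymm : Continuous e.symm := by
      rw [hhquot.continuous_iff]
      have : e.symm ∘ h = id := by
        funext z
        exact e.symm_apply_apply z
      rw [this]
      exact continuous_id
    exact ⟨⟨e, hhc, hesymm⟩, fun b => rfl⟩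
end

section
/- Let L be a linearly ordered set and let X = L × [0,1] carry the order topology of the lexicographic order. Then the path components of X are exactly the sets {ℓ} × [0,1] for ℓ ∈ L; consequently the path-component space π₀(X) is homeomorphic to L with its order topology, via the map induced by projection onto the first coordinate. -/
open Set Filter Topology
set_option linter.unusedSectionVars false

section Aux
variable {L : Type*} [LinearOrder L] [TopologicalSpace L] [OrderTopology L]
  [TopologicalSpace (Lex (L × unitInterval))] [OrderTopology (Lex (L × unitInterval))]

lemma lex_lt_iff (x y : Lex (L × unitInterval)) :
    x < y ↔ (ofLex x).1 < (ofLex y).1 ∨ (ofLex x).1 = (ofLex y).1 ∧ (ofLex x).2 < (ofLex y).2 :=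
  Prod.Lex.lt_iff

lemma lex_le_iff (x y : Lex (L × unitInterval)) :
    x ≤ y ↔ (ofLex x).1 < (ofLex y).1 ∨ (ofLex x).1 = (ofLex y).1 ∧ (ofLex x).2 ≤ (ofLex y).2 :=
  Prod.Lex.le_iff

lemma continuous_lexSection (ℓ : L) :
    Continuous (fun t : unitInterval => (toLex (ℓ, t) : Lex (L × unitInterval))) := by
  rw [OrderTopology.topology_eq_generate_intervals (α := Lex (L × unitInterval)),
    continuous_generateFrom_iff]
  rintro s ⟨a, rfl | rfl⟩
  · rcases lt_trichotomy (ofLex a).1 ℓ with h | h | h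
    · have : (fun t : unitInterval => (toLex (ℓ, t) : Lex (L × unitInterval))) ⁻¹' Ioi a
          = univ := by
        ext t; simp only [mem_preimage, mem_Ioi, mem_univ, iff_true, lex_lt_iff, ofLex_toLex]
        exact Or.inl h
      rw [this]; exact isOpen_univ
    · have : (fun t : unitInterval => (toLex (ℓ, t) : Lex (L × unitInterval))) ⁻¹' Ioi a
          = Ioi (ofLex a).2 := by
        ext t; simp only [mem_preimage, mem_Ioi, lex_lt_iff, ofLex_toLex]
        constructor
        · rintro (h' | ⟨-, h'⟩)
          · exact (lt_irrefl ℓ (h ▸ h')).elim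
          · exact h'
        · exact fun h' => Or.inr ⟨h, h'⟩
      rw [this]; exact isOpen_Ioi
    · have : (fun t : unitInterval => (toLex (ℓ, t) : Lex (L × unitInterval))) ⁻¹' Ioi a
          = ∅ := by
        ext t; simp only [mem_preimage, mem_Ioi, mem_empty_iff_false, iff_false, lex_lt_iff,
          ofLex_toLex]
        rintro (h' | ⟨h', -⟩)
        · exact absurd (h.trans h') (lt_irrefl _)
        · exact absurd (h' ▸ h) (lt_irrefl _)
      rw [this]; exact isOpen_empty
  · rcases lt_trichotomy ℓ (ofLex a).1 with h | h | h
    · have : (fun t : unitInterval => (toLex (ℓ, t) : Lex (L × unitInterval))) ⁻¹' Iio a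
          = univ := by
        ext t; simp only [mem_preimage, mem_Iio, mem_univ, iff_true, lex_lt_iff, ofLex_toLex]
        exact Or.inl h
      rw [this]; exact isOpen_univ
    · have : (fun t : unitInterval => (toLex (ℓ, t) : Lex (L × unitInterval))) ⁻¹' Iio a
          = Iio (ofLex a).2 := by
        ext t; simp only [mem_preimage, mem_Iio, lex_lt_iff, ofLex_toLex]
        constructor
        · rintro (h' | ⟨-, h'⟩)
          · exact (lt_irrefl ℓ (h ▸ h')).elim
          · exact h'
        · exact fun h' => Or.inr ⟨h, h'⟩
      rw [this]; exact isOpen_Iio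
    · have : (fun t : unitInterval => (toLex (ℓ, t) : Lex (L × unitInterval))) ⁻¹' Iio a
          = ∅ := by
        ext t; simp only [mem_preimage, mem_Iio, mem_empty_iff_false, iff_false, lex_lt_iff,
          ofLex_toLex]
        rintro (h' | ⟨h', -⟩)
        · exact absurd (h'.trans h) (lt_irrefl _)
        · exact absurd (h' ▸ h) (lt_irrefl _)
      rw [this]; exact isOpen_empty

lemma tendsto_lexSection_right (ℓ : L) :
    Tendsto (fun m : L => (toLex (m, (1 : unitInterval)) : Lex (L × unitInterval)))
      (𝓝[≥] ℓ) (𝓝 (toLex (ℓ, (1 : unitInterval)))) := by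
  rw [OrderTopology.topology_eq_generate_intervals (α := Lex (L × unitInterval)),
    TopologicalSpace.tendsto_nhds_generateFrom_iff]
  rintro s ⟨a, rfl | rfl⟩ hmem
  · rw [mem_Ioi, lex_lt_iff, ofLex_toLex] at hmem
    rcases hmem with h | ⟨h, h1⟩
    · refine mem_of_superset (mem_nhdsWithin_of_mem_nhds (isOpen_Ioi.mem_nhds h)) ?_
      intro m hm
      rw [mem_preimage, mem_Ioi, lex_lt_iff, ofLex_toLex]
      exact Or.inl hm
    · refine mem_of_superset self_mem_nhdsWithin ?_
      intro m hm
      rw [mem_preimage, mem_Ioi, lex_lt_iff, ofLex_toLex]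
      rcases eq_or_lt_of_le (mem_Ici.1 hm) with h' | h'
      · exact Or.inr ⟨h.trans h', h1⟩
      · exact Or.inl (h ▸ h')
  · rw [mem_Iio, lex_lt_iff, ofLex_toLex] at hmem
    rcases hmem with h | ⟨-, h1⟩
    · refine mem_of_superset (mem_nhdsWithin_of_mem_nhds (isOpen_Iio.mem_nhds h)) ?_
      intro m hm
      rw [mem_preimage, mem_Iio, lex_lt_iff, ofLex_toLex]
      exact Or.inl hm
    · exact absurd h1 (not_lt.2 (ofLex a).2.2.2)

lemma tendsto_lexSection_left (ℓ : L) :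
    Tendsto (fun m : L => (toLex (m, (0 : unitInterval)) : Lex (L × unitInterval)))
      (𝓝[≤] ℓ) (𝓝 (toLex (ℓ, (0 : unitInterval)))) := by
  rw [OrderTopology.topology_eq_generate_intervals (α := Lex (L × unitInterval)),
    TopologicalSpace.tendsto_nhds_generateFrom_iff]
  rintro s ⟨a, rfl | rfl⟩ hmem
  · rw [mem_Ioi, lex_lt_iff, ofLex_toLex] at hmem
    rcases hmem with h | ⟨-, h1⟩
    · refine mem_of_superset (mem_nhdsWithin_of_mem_nhds (isOpen_Ioi.mem_nhds h)) ?_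
      intro m hm
      rw [mem_preimage, mem_Ioi, lex_lt_iff, ofLex_toLex]
      exact Or.inl hm
    · exact absurd h1 (not_lt.2 (ofLex a).2.2.1)
  · rw [mem_Iio, lex_lt_iff, ofLex_toLex] at hmem
    rcases hmem with h | ⟨h, h1⟩
    · refine mem_of_superset (mem_nhdsWithin_of_mem_nhds (isOpen_Iio.mem_nhds h)) ?_
      intro m hm
      rw [mem_preimage, mem_Iio, lex_lt_iff, ofLex_toLex]
      exact Or.inl hm
    · refine mem_of_superset self_mem_nhdsWithin ?_
      intro m hm
      rw [mem_preimage, mem_Iio, lex_lt_iff, ofLex_toLex]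
      rcases eq_or_lt_of_le (mem_Iic.1 hm) with h' | h'
      · exact Or.inr ⟨h'.trans h, h1⟩
      · exact Or.inl (h ▸ h')


lemma continuous_lexFst : Continuous (fun x : Lex (L × unitInterval) => (ofLex x).1) := by
  rw [OrderTopology.topology_eq_generate_intervals (α := L), continuous_generateFrom_iff]
  rintro s ⟨m, rfl | rfl⟩
  · have : (fun x : Lex (L × unitInterval) => (ofLex x).1) ⁻¹' Ioi m
        = Ioi (toLex (m, (1 : unitInterval))) := by
      ext x
      simp only [mem_preimage, mem_Ioi, lex_lt_iff, ofLex_toLex]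
      constructor
      · exact fun h => Or.inl h
      · rintro (h | ⟨-, h⟩)
        · exact h
        · exact absurd h (not_lt.2 (ofLex x).2.2.2)
    rw [this]; exact isOpen_Ioi
  · have : (fun x : Lex (L × unitInterval) => (ofLex x).1) ⁻¹' Iio m
        = Iio (toLex (m, (0 : unitInterval))) := by
      ext x
      simp only [mem_preimage, mem_Iio, lex_lt_iff, ofLex_toLex]
      constructor
      · exact fun h => Or.inl h
      · rintro (h | ⟨-, h⟩)
        · exact h
        · exact absurd h (not_lt.2 (ofLex x).2.2.1)
    rw [this]; exact isOpen_Iio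

lemma isQuotientMap_lexFst :
    Topology.IsQuotientMap (fun x : Lex (L × unitInterval) => (ofLex x).1) := by
  rw [Topology.isQuotientMap_iff]
  refine ⟨Topology.IsCoinducing.of_isOpen_preimage_iff_isOpen fun U => ⟨fun hU => ?_,
    fun hU => hU.preimage continuous_lexFst⟩, fun ℓ => ⟨toLex (ℓ, 0), rfl⟩⟩
  rw [isOpen_iff_mem_nhds]
  intro ℓ hℓ
  rw [← nhdsLE_sup_nhdsGE, Filter.mem_sup]
  constructor
  · have h0 : toLex (ℓ, (0 : unitInterval)) ∈
        (fun x : Lex (L × unitInterval) => (ofLex x).1) ⁻¹' U := hℓ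
    have := Filter.mem_map.1 (tendsto_lexSection_left ℓ (hU.mem_nhds h0))
    exact this
  · have h1 : toLex (ℓ, (1 : unitInterval)) ∈
        (fun x : Lex (L × unitInterval) => (ofLex x).1) ⁻¹' U := hℓ
    have := Filter.mem_map.1 (tendsto_lexSection_right ℓ (hU.mem_nhds h1))
    exact this

lemma joined_of_fst_eq {a b : Lex (L × unitInterval)} (h : (ofLex a).1 = (ofLex b).1) :
    Joined a b := by
  haveI : PathConnectedSpace unitInterval :=
    isPathConnected_iff_pathConnectedSpace.mp
      ((convex_Icc (0:ℝ) 1).isPathConnected ⟨0, le_refl _, zero_le_one⟩)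
  obtain ⟨γ⟩ := PathConnectedSpace.joined (ofLex a).2 (ofLex b).2
  have h1 : Joined a (toLex ((ofLex a).1, (ofLex b).2)) := ⟨γ.map (continuous_lexSection _)⟩
  rw [h] at h1
  exact h1

lemma fst_eq_of_mem_Ioo {ℓ : L} {x : Lex (L × unitInterval)}
    (hx : x ∈ Ioo (toLex (ℓ, (0:unitInterval))) (toLex (ℓ, (1:unitInterval)))) :
    (ofLex x).1 = ℓ := by
  obtain ⟨h1, h2⟩ := hx
  rw [lex_lt_iff, ofLex_toLex] at h1 h2
  rcases h1 with h1 | ⟨h1, -⟩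
  · rcases h2 with h2 | ⟨h2, -⟩
    · exact absurd (h1.trans h2) (lt_irrefl _)
    · exact h2
  · exact h1.symm

lemma fst_eq_of_joined {a b : Lex (L × unitInterval)} (h : Joined a b) :
    (ofLex a).1 = (ofLex b).1 := by
  by_contra hne
  wlog hlt : (ofLex a).1 < (ofLex b).1 generalizing a b
  · exact this h.symm (Ne.symm hne) ((Ne.lt_or_gt hne).resolve_left hlt)
  obtain ⟨p⟩ := h
  set ℓ₁ := (ofLex a).1 with hℓ₁
  set ℓ₂ := (ofLex b).1 with hℓ₂
  haveI : PreconnectedSpace unitInterval := Subtype.preconnectedSpace isPreconnected_Icc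
  -- the range of the path is order-connected
  have hconn : IsPreconnected (range (p : unitInterval → Lex (L × unitInterval))) :=
    isPreconnected_range p.continuous
  have hord := hconn.ordConnected
  have hIcc : Icc a b ⊆ range (p : unitInterval → Lex (L × unitInterval)) :=
    hord.out ⟨0, p.source⟩ ⟨1, p.target⟩
  -- middle fibers give disjoint nonempty open subsets of the unit interval
  set half : unitInterval := ⟨1/2, by norm_num, by norm_num⟩ with hhalf
  have h0half : (0 : unitInterval) < half := by
    rw [← Subtype.coe_lt_coe]; norm_num [hhalf]
  have hhalf1 : half < (1 : unitInterval) := by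
    rw [← Subtype.coe_lt_coe]; norm_num [hhalf]
  set V : L → Set unitInterval := fun ℓ =>
    (p : unitInterval → Lex (L × unitInterval)) ⁻¹'
      (Ioo (toLex (ℓ, (0:unitInterval))) (toLex (ℓ, (1:unitInterval)))) with hV
  have hVopen : ∀ ℓ, IsOpen (V ℓ) := fun ℓ => isOpen_Ioo.preimage p.continuous
  have hVne : ∀ ℓ ∈ Ioo ℓ₁ ℓ₂, (V ℓ).Nonempty := by
    intro ℓ hℓ
    have hmem : toLex (ℓ, half) ∈ Icc a b := by
      constructor
      · rw [lex_le_iff, ofLex_toLex]; exact Or.inl hℓ.1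
      · rw [lex_le_iff, ofLex_toLex]; exact Or.inl hℓ.2
    obtain ⟨t, ht⟩ := hIcc hmem
    refine ⟨t, ?_⟩
    rw [hV, mem_preimage, ht]
    constructor
    · rw [lex_lt_iff, ofLex_toLex, ofLex_toLex]; exact Or.inr ⟨rfl, h0half⟩
    · rw [lex_lt_iff, ofLex_toLex, ofLex_toLex]; exact Or.inr ⟨rfl, hhalf1⟩
  have hVdisj : (Ioo ℓ₁ ℓ₂).PairwiseDisjoint V := by
    intro x hx y hy hxy
    rw [Function.onFun, Set.disjoint_left]
    intro t htx hty
    exact hxy ((fst_eq_of_mem_Ioo htx).symm.trans (fst_eq_of_mem_Ioo hty))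
  have hIooCount : (Ioo ℓ₁ ℓ₂).Countable :=
    hVdisj.countable_of_isOpen (fun ℓ _ => hVopen ℓ) hVne
  have hIccCount : (Icc ℓ₁ ℓ₂).Countable := by
    refine ((hIooCount.insert ℓ₁).insert ℓ₂).mono ?_
    intro x hx
    rcases eq_or_lt_of_le hx.1 with h1 | h1
    · exact mem_insert_of_mem _ (mem_insert_iff.2 (Or.inl h1.symm))
    rcases eq_or_lt_of_le hx.2 with h2 | h2
    · exact mem_insert_iff.2 (Or.inl h2)
    · exact mem_insert_of_mem _ (mem_insert_of_mem _ ⟨h1, h2⟩)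
  -- clamped first coordinate of the path
  set g : unitInterval → L := fun t =>
    min ℓ₂ (max ℓ₁ ((ofLex ((p : unitInterval → Lex (L × unitInterval)) t)).1)) with hg
  have hgc : Continuous g :=
    continuous_const.min (continuous_const.max (continuous_lexFst.comp p.continuous))
  have hg0 : g 0 = ℓ₁ := by
    rw [hg]; simp only [p.source]
    rw [max_self, min_eq_right hlt.le]
  have hg1 : g 1 = ℓ₂ := by
    rw [hg]; simp only [p.target]
    rw [max_eq_right hlt.le, min_self]
  have hrange_sub : range g ⊆ Icc ℓ₁ ℓ₂ := by
    rintro - ⟨t, rfl⟩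
    exact ⟨le_min hlt.le (le_max_left _ _), min_le_left _ _⟩
  have hrange_conn : IsPreconnected (range g) := isPreconnected_range hgc
  have hKeq : range g = Icc ℓ₁ ℓ₂ :=
    subset_antisymm hrange_sub (hrange_conn.ordConnected.out ⟨0, hg0⟩ ⟨1, hg1⟩)
  have hKcomp : IsCompact (Icc ℓ₁ ℓ₂) := hKeq ▸ isCompact_range hgc
  have hKconn : IsPreconnected (Icc ℓ₁ ℓ₂) := hKeq ▸ hrange_conn
  -- the subtype `Icc ℓ₁ ℓ₂` is a countable compact connected T2 space with ≥ 2 points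
  haveI : CompactSpace ↥(Icc ℓ₁ ℓ₂) := isCompact_iff_compactSpace.mp hKcomp
  haveI : Countable ↥(Icc ℓ₁ ℓ₂) := hIccCount.to_subtype
  haveI : PreconnectedSpace ↥(Icc ℓ₁ ℓ₂) := Subtype.preconnectedSpace hKconn
  haveI : Nonempty ↥(Icc ℓ₁ ℓ₂) := ⟨⟨ℓ₁, left_mem_Icc.2 hlt.le⟩⟩
  obtain ⟨i, x, hx⟩ := nonempty_interior_of_iUnion_of_closed
    (X := ↥(Icc ℓ₁ ℓ₂)) (f := fun i => {i}) (fun i => isClosed_singleton)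
    (iUnion_of_singleton _)
  have hxi : x = i := mem_singleton_iff.1 (interior_subset hx)
  have hopen : IsOpen ({i} : Set ↥(Icc ℓ₁ ℓ₂)) := by
    have : interior ({i} : Set ↥(Icc ℓ₁ ℓ₂)) = {i} := by
      refine subset_antisymm interior_subset ?_
      rintro y rfl
      exact hxi ▸ hx
    rw [← this]; exact isOpen_interior
  rcases isClopen_iff.mp ⟨isClosed_singleton, hopen⟩ with h' | h'
  · exact singleton_ne_empty i h'
  · have h1 : (⟨ℓ₁, left_mem_Icc.2 hlt.le⟩ : ↥(Icc ℓ₁ ℓ₂)) ∈ ({i} : Set ↥(Icc ℓ₁ ℓ₂)) :=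
      h' ▸ mem_univ _
    have h2 : (⟨ℓ₂, right_mem_Icc.2 hlt.le⟩ : ↥(Icc ℓ₁ ℓ₂)) ∈ ({i} : Set ↥(Icc ℓ₁ ℓ₂)) :=
      h' ▸ mem_univ _
    have : ℓ₁ = ℓ₂ := by
      have := (mem_singleton_iff.1 h1).trans (mem_singleton_iff.1 h2).symm
      exact congrArg Subtype.val this
    exact hlt.ne this

end Aux

/-- For a linear order `L`, the lexicographically ordered space `X = L ×ₗ [0,1]` with the
order topology has path components exactly the vertical segments `{ℓ} × [0,1]`, and
`π₀(X)` is homeomorphic to `L` (with its order topology) via first-coordinate projection. -/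
theorem pi0_lex_prod_interval {L : Type*} [LinearOrder L] [TopologicalSpace L]
    [OrderTopology L] [TopologicalSpace (Lex (L × unitInterval))]
    [OrderTopology (Lex (L × unitInterval))] :
    (∀ a b : Lex (L × unitInterval),
        Joined a b ↔ (ofLex a).1 = (ofLex b).1) ∧
    ∃ h : ZerothHomotopy (Lex (L × unitInterval)) ≃ₜ L,
      ∀ x : Lex (L × unitInterval), h (pi0Mk x) = (ofLex x).1 := by
  have part1 : ∀ a b : Lex (L × unitInterval),
      Joined a b ↔ (ofLex a).1 = (ofLex b).1 :=
    fun a b => ⟨fst_eq_of_joined, joined_of_fst_eq⟩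
  refine ⟨part1, ?_⟩
  have hq := isQuotientMap_lexFst (L := L)
  refine ⟨⟨⟨Quotient.lift (fun x : Lex (L × unitInterval) => (ofLex x).1)
      (fun a b hab => (part1 a b).1 hab),
      fun ℓ => pi0Mk (toLex (ℓ, 0)), ?_, fun ℓ => rfl⟩, ?_, ?_⟩, fun x => rfl⟩
  · refine Quotient.ind (fun x => ?_)
    exact Quotient.sound (joined_of_fst_eq rfl)
  · exact continuous_lexFst.quotient_lift _
  · show Continuous fun ℓ : L => pi0Mk (toLex (ℓ, (0 : unitInterval)))
    rw [hq.continuous_iff]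
    have : (fun x : Lex (L × unitInterval) => pi0Mk (toLex ((ofLex x).1, (0 : unitInterval))))
        = fun x => pi0Mk x :=
      funext fun x => Quotient.sound (joined_of_fst_eq rfl)
    show Continuous ((fun ℓ : L => pi0Mk (toLex (ℓ, (0 : unitInterval)))) ∘
      (fun x : Lex (L × unitInterval) => (ofLex x).1))
    have hcomp : ((fun ℓ : L => pi0Mk (toLex (ℓ, (0 : unitInterval)))) ∘
        (fun x : Lex (L × unitInterval) => (ofLex x).1))
        = fun x : Lex (L × unitInterval) => pi0Mk (toLex ((ofLex x).1, (0 : unitInterval))) := rfl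
    rw [hcomp, this]
    exact continuous_quotient_mk'
end
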